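/- Let S be an N×N Hermitian positive semidefinite complex matrix with eigenvalues λ_1(S) ≥ λ_2(S) ≥ … ≥ λ_N(S) listed in decreasing order with multiplicity, let 1 ≤ M ≤ N, let F ∈ ℂ^{N×M} satisfy FᴴF = I_M (semi-orthogonal), and let c > 0 be real. Then Tr(FᴴSF (c·FᴴSF + I_M)⁻¹) ≤ Σ_{i=1}^M λ_i(S) / (c·λ_i(S) + 1). -/

import Mathlib

open Matrix Module
open scoped ComplexOrder

lemma dot_conj_move {n m : ℕ} (G : Matrix (Fin n) (Fin m) ℂ) (B : Matrix (Fin n) (Fin n) ℂ)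
    (c : Fin m → ℂ) :
    star (G *ᵥ c) ⬝ᵥ (B *ᵥ (G *ᵥ c)) = star c ⬝ᵥ ((Gᴴ * B * G) *ᵥ c) := by
  rw [star_mulVec, mulVec_mulVec, ← dotProduct_mulVec, mulVec_mulVec, Matrix.mul_assoc]

lemma dot_self_eq {m : ℕ} (c : Fin m → ℂ) :
    star c ⬝ᵥ c = ((∑ k, Complex.normSq (c k) : ℝ) : ℂ) := by
  push_cast
  simp [dotProduct, Complex.normSq_eq_conj_mul_self]

lemma diag_quad {n : ℕ} (d : Fin n → ℝ) (c : Fin n → ℂ) :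
    star c ⬝ᵥ ((diagonal (Complex.ofReal ∘ d)) *ᵥ c)
      = ((∑ k, d k * Complex.normSq (c k) : ℝ) : ℂ) := by
  push_cast
  simp only [dotProduct, mulVec_diagonal, Pi.star_apply, Function.comp_apply]
  congr 1; ext k
  rw [Complex.normSq_eq_conj_mul_self, Complex.star_def]
  ring

lemma norm_preserve {n m : ℕ} (G : Matrix (Fin n) (Fin m) ℂ) (hG : Gᴴ * G = 1)
    (c : Fin m → ℂ) :
    star (G *ᵥ c) ⬝ᵥ (G *ᵥ c) = star c ⬝ᵥ c := by
  rw [star_mulVec, ← dotProduct_mulVec, mulVec_mulVec, hG, one_mulVec]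

lemma mulVec_inj {n m : ℕ} (G : Matrix (Fin n) (Fin m) ℂ) (hG : Gᴴ * G = 1) :
    Function.Injective G.mulVecLin := by
  intro a b hab
  have : Gᴴ *ᵥ (G *ᵥ a) = Gᴴ *ᵥ (G *ᵥ b) := by
    simpa [mulVecLin_apply] using congrArg (Gᴴ *ᵥ ·) hab
  simpa [mulVec_mulVec, hG] using this

noncomputable def sspan {n : ℕ} (s : Finset (Fin n)) : Submodule ℂ (Fin n → ℂ) :=
  Submodule.span ℂ ((fun k => (Pi.single k 1 : Fin n → ℂ)) '' s)

lemma sspan_vanish {n : ℕ} {s : Finset (Fin n)} {x : Fin n → ℂ} (hx : x ∈ sspan s) :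
    ∀ k ∉ s, x k = 0 := by
  intro k hk
  induction hx using Submodule.span_induction with
  | mem y hy =>
    obtain ⟨j, hj, rfl⟩ := hy
    have : j ≠ k := fun h => hk (h ▸ hj)
    simp [Pi.single_apply, this]
  | zero => simp
  | add y z _ _ hy hz => simp [hy, hz]
  | smul a y _ hy => simp [hy]

lemma sspan_finrank {n : ℕ} (s : Finset (Fin n)) :
    finrank ℂ (sspan s) = s.card := by
  have hli : LinearIndependent ℂ (fun k : s => (Pi.single (k : Fin n) 1 : Fin n → ℂ)) := by
    have h := (Pi.basisFun ℂ (Fin n)).linearIndependent.comp (Subtype.val : {k // k ∈ s} → Fin n) Subtype.val_injective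
    have he : (⇑(Pi.basisFun ℂ (Fin n)) ∘ (Subtype.val : s → Fin n))
        = fun k : s => (Pi.single (k : Fin n) 1 : Fin n → ℂ) := by
      funext k; simp [Pi.basisFun_apply]
    rwa [he] at h
  have : sspan s = Submodule.span ℂ (Set.range fun k : s => (Pi.single (k : Fin n) 1 : Fin n → ℂ)) := by
    unfold sspan
    congr 1
    ext y
    simp [Set.range, Set.mem_image]
  rw [this, finrank_span_eq_card hli, Fintype.card_coe]

lemma unitary_stars {k : ℕ} (U : Matrix.unitaryGroup (Fin k) ℂ) :
    (U : Matrix (Fin k) (Fin k) ℂ)ᴴ * U = 1 := by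
  have h := Unitary.coe_star_mul_self U
  rwa [Matrix.star_eq_conjTranspose] at h

lemma interlace {n m : ℕ} (hmn : m ≤ n)
    (A : Matrix (Fin n) (Fin n) ℂ) (hA : A.IsHermitian)
    (F : Matrix (Fin n) (Fin m) ℂ) (hF : Fᴴ * F = 1)
    (hB : (Fᴴ * A * F).IsHermitian)
    (μ : Fin n → ℝ) (σ : Equiv.Perm (Fin n)) (hμ : μ = hA.eigenvalues ∘ σ)
    (hμdec : ∀ i j : Fin n, i ≤ j → μ j ≤ μ i)
    (ν : Fin m → ℝ) (τ : Equiv.Perm (Fin m)) (hν : ν = hB.eigenvalues ∘ τ)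
    (hνdec : ∀ i j : Fin m, i ≤ j → ν j ≤ ν i)
    (i : Fin m) : ν i ≤ μ (Fin.castLE hmn i) := by
  classical
  set a := μ (Fin.castLE hmn i) with ha
  set P : Matrix (Fin n) (Fin n) ℂ := (hA.eigenvectorUnitary : Matrix (Fin n) (Fin n) ℂ) with hPdef
  set Q : Matrix (Fin m) (Fin m) ℂ := (hB.eigenvectorUnitary : Matrix (Fin m) (Fin m) ℂ) with hQdef
  have hP : Pᴴ * P = 1 := unitary_stars _
  have hQ : Qᴴ * Q = 1 := unitary_stars _
  set sA : Finset (Fin n) := (Finset.Ici (Fin.castLE hmn i)).image σ with hsA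
  set sB : Finset (Fin m) := (Finset.Iic i).image τ with hsB
  set X : Submodule ℂ (Fin n → ℂ) := Submodule.map P.mulVecLin (sspan sA) with hX
  set Y : Submodule ℂ (Fin n → ℂ) :=
    Submodule.map F.mulVecLin (Submodule.map Q.mulVecLin (sspan sB)) with hY
  have hcardA : sA.card = n - i := by
    rw [hsA, Finset.card_image_of_injective _ σ.injective, Fin.card_Ici]
    rfl
  have hcardB : sB.card = i + 1 := by
    rw [hsB, Finset.card_image_of_injective _ τ.injective, Fin.card_Iic]
  have hfX : finrank ℂ X = n - i := by
    rw [hX, ← LinearEquiv.finrank_eq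
      (Submodule.equivMapOfInjective P.mulVecLin (mulVec_inj P hP) (sspan sA)),
      sspan_finrank, hcardA]
  have hfY : finrank ℂ Y = i + 1 := by
    rw [hY, ← LinearEquiv.finrank_eq
      (Submodule.equivMapOfInjective F.mulVecLin (mulVec_inj F hF) _),
      ← LinearEquiv.finrank_eq
      (Submodule.equivMapOfInjective Q.mulVecLin (mulVec_inj Q hQ) (sspan sB)),
      sspan_finrank, hcardB]
  have hin : (i : ℕ) < n := lt_of_lt_of_le i.isLt hmn
  have hne : X ⊓ Y ≠ ⊥ := by
    intro h
    have hs := Submodule.finrank_sup_add_finrank_inf_eq X Y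
    rw [h, finrank_bot, hfX, hfY] at hs
    have hle : finrank ℂ (X ⊔ Y : Submodule ℂ (Fin n → ℂ)) ≤ n := by
      have := Submodule.finrank_le (X ⊔ Y)
      rwa [finrank_fintype_fun_eq_card, Fintype.card_fin] at this
    omega
  obtain ⟨x, hx, hx0⟩ := Submodule.exists_mem_ne_zero_of_ne_bot hne
  obtain ⟨cA, hcA, hxA⟩ := Submodule.mem_map.mp hx.1
  obtain ⟨y, hy, hxF⟩ := Submodule.mem_map.mp hx.2
  obtain ⟨cB, hcB, hyB⟩ := Submodule.mem_map.mp hy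
  rw [mulVecLin_apply] at hxA hxF hyB
  -- quadratic form computed two ways
  have hdA : Pᴴ * A * P = diagonal (Complex.ofReal ∘ hA.eigenvalues) := by
    simpa [Matrix.star_eq_conjTranspose] using hA.conjStarAlgAut_star_eigenvectorUnitary
  have hdB : Qᴴ * (Fᴴ * A * F) * Q = diagonal (Complex.ofReal ∘ hB.eigenvalues) := by
    simpa [Matrix.star_eq_conjTranspose] using hB.conjStarAlgAut_star_eigenvectorUnitary
  have E1 : star x ⬝ᵥ (A *ᵥ x)
      = ((∑ k, hA.eigenvalues k * Complex.normSq (cA k) : ℝ) : ℂ) := by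
    rw [← hxA, dot_conj_move, hdA, diag_quad]
  have E2 : star x ⬝ᵥ (A *ᵥ x)
      = ((∑ j, hB.eigenvalues j * Complex.normSq (cB j) : ℝ) : ℂ) := by
    rw [← hxF, dot_conj_move, ← hyB, dot_conj_move, hdB, diag_quad]
  have N1 : star x ⬝ᵥ x = ((∑ k, Complex.normSq (cA k) : ℝ) : ℂ) := by
    rw [← hxA, norm_preserve P hP, dot_self_eq]
  have N2 : star x ⬝ᵥ x = ((∑ j, Complex.normSq (cB j) : ℝ) : ℂ) := by
    rw [← hxF, norm_preserve F hF, ← hyB, norm_preserve Q hQ, dot_self_eq]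
  have hEr : (∑ j, hB.eigenvalues j * Complex.normSq (cB j))
      = ∑ k, hA.eigenvalues k * Complex.normSq (cA k) :=
    Complex.ofReal_inj.mp (E2 ▸ E1 ▸ rfl)
  have hNr : (∑ k, Complex.normSq (cA k)) = ∑ j, Complex.normSq (cB j) :=
    Complex.ofReal_inj.mp (N1 ▸ N2 ▸ rfl)
  have hA_le : ∀ k, hA.eigenvalues k * Complex.normSq (cA k) ≤ a * Complex.normSq (cA k) := by
    intro k
    by_cases h0 : cA k = 0
    · simp [h0]
    · have hk : k ∈ sA := by
        by_contra hk
        exact h0 (sspan_vanish hcA k hk)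
      obtain ⟨k', hk', rfl⟩ := Finset.mem_image.mp hk
      have hle : μ k' ≤ a := hμdec _ _ (Finset.mem_Ici.mp hk')
      have he : hA.eigenvalues (σ k') = μ k' := by rw [hμ]; rfl
      exact mul_le_mul_of_nonneg_right (he ▸ hle) (Complex.normSq_nonneg _)
  have hB_ge : ∀ j, ν i * Complex.normSq (cB j) ≤ hB.eigenvalues j * Complex.normSq (cB j) := by
    intro j
    by_cases h0 : cB j = 0
    · simp [h0]
    · have hj : j ∈ sB := by
        by_contra hj
        exact h0 (sspan_vanish hcB j hj)
      obtain ⟨j', hj', rfl⟩ := Finset.mem_image.mp hj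
      have hle : ν i ≤ ν j' := hνdec _ _ (Finset.mem_Iic.mp hj')
      have he : hB.eigenvalues (τ j') = ν j' := by rw [hν]; rfl
      exact mul_le_mul_of_nonneg_right (he ▸ hle) (Complex.normSq_nonneg _)
  have hposA : 0 < ∑ k, Complex.normSq (cA k) := by
    have hcA0 : cA ≠ 0 := by
      intro h; apply hx0; rw [← hxA, h]; simp
    obtain ⟨k, hk⟩ := Function.ne_iff.mp hcA0
    exact Finset.sum_pos' (fun _ _ => Complex.normSq_nonneg _)
      ⟨k, Finset.mem_univ k, Complex.normSq_pos.mpr hk⟩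
  have h1 : ν i * (∑ k, Complex.normSq (cA k)) ≤ ∑ k, hA.eigenvalues k * Complex.normSq (cA k) := by
    calc ν i * (∑ k, Complex.normSq (cA k)) = ∑ j, ν i * Complex.normSq (cB j) := by
          rw [hNr, Finset.mul_sum]
      _ ≤ ∑ j, hB.eigenvalues j * Complex.normSq (cB j) :=
          Finset.sum_le_sum fun j _ => hB_ge j
      _ = _ := hEr
  have h2 : (∑ k, hA.eigenvalues k * Complex.normSq (cA k))
      ≤ a * ∑ k, Complex.normSq (cA k) := by
    rw [Finset.mul_sum]
    exact Finset.sum_le_sum fun k _ => hA_le k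
  exact le_of_mul_le_mul_right (h1.trans h2) hposA

lemma unitary_stars' {k : ℕ} (U : Matrix.unitaryGroup (Fin k) ℂ) :
    (U : Matrix (Fin k) (Fin k) ℂ)ᴴ * U = 1 := by
  have h := Unitary.coe_star_mul_self U
  rwa [Matrix.star_eq_conjTranspose] at h

lemma unitary_stars'' {k : ℕ} (U : Matrix.unitaryGroup (Fin k) ℂ) :
    (U : Matrix (Fin k) (Fin k) ℂ) * (U : Matrix (Fin k) (Fin k) ℂ)ᴴ = 1 := by
  have h := Unitary.coe_mul_star_self U
  rwa [show ((star U : Matrix.unitaryGroup (Fin k) ℂ) : Matrix (Fin k) (Fin k) ℂ)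
    = ((U : Matrix (Fin k) (Fin k) ℂ))ᴴ from rfl] at h

lemma trace_resolvent {m : ℕ} (B : Matrix (Fin m) (Fin m) ℂ) (hB : B.PosSemidef)
    (c : ℝ) (hc : 0 < c) :
    Matrix.trace (B * ((c : ℂ) • B + 1)⁻¹)
      = ((∑ j, hB.1.eigenvalues j / (c * hB.1.eigenvalues j + 1) : ℝ) : ℂ) := by
  classical
  set l : Fin m → ℝ := hB.1.eigenvalues with hl
  set Q : Matrix (Fin m) (Fin m) ℂ := (hB.1.eigenvectorUnitary : Matrix (Fin m) (Fin m) ℂ)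
    with hQdef
  have hQ : Qᴴ * Q = 1 := unitary_stars' _
  have hQ' : Q * Qᴴ = 1 := unitary_stars'' _
  set D : Matrix (Fin m) (Fin m) ℂ := diagonal (Complex.ofReal ∘ l) with hD
  have hspec : B = Q * D * Qᴴ := by
    have := hB.1.spectral_theorem
    rwa [Unitary.conjStarAlgAut_apply, Matrix.star_eq_conjTranspose] at this
  have hpos : ∀ j, (0:ℝ) < c * l j + 1 := by
    intro j
    have := hB.eigenvalues_nonneg j
    positivity
  set g : Fin m → ℂ := fun j => ((c * l j + 1 : ℝ) : ℂ)⁻¹ with hg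
  have key : (c : ℂ) • B + 1 = Q * diagonal (fun j => ((c * l j + 1 : ℝ) : ℂ)) * Qᴴ := by
    have h1 : diagonal (fun j => ((c * l j + 1 : ℝ) : ℂ)) = (c : ℂ) • D + 1 := by
      ext i j
      by_cases h : i = j
      · subst h
        simp only [hD, diagonal_apply_eq, Matrix.add_apply, Matrix.smul_apply,
          Matrix.one_apply_eq, Function.comp_apply, smul_eq_mul]
        push_cast
        ring
      · simp [hD, diagonal_apply_ne _ h, Matrix.one_apply_ne h]
    rw [h1, Matrix.mul_add, Matrix.mul_one, Matrix.add_mul, hQ', Matrix.mul_smul,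
      Matrix.smul_mul, ← hspec]
  have hinv : ((c : ℂ) • B + 1)⁻¹ = Q * diagonal g * Qᴴ := by
    apply inv_eq_right_inv
    rw [key]
    calc Q * diagonal (fun j => ((c * l j + 1 : ℝ) : ℂ)) * Qᴴ * (Q * diagonal g * Qᴴ)
        = Q * diagonal (fun j => ((c * l j + 1 : ℝ) : ℂ)) * (Qᴴ * Q) * diagonal g * Qᴴ := by
          simp only [Matrix.mul_assoc]
      _ = Q * (diagonal (fun j => ((c * l j + 1 : ℝ) : ℂ)) * diagonal g) * Qᴴ := by
          rw [hQ, Matrix.mul_one]; simp only [Matrix.mul_assoc]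
      _ = 1 := by
          rw [diagonal_mul_diagonal]
          have : (fun j => ((c * l j + 1 : ℝ) : ℂ) * g j) = fun _ => 1 := by
            funext j
            exact mul_inv_cancel₀ (by exact_mod_cast (hpos j).ne')
          rw [this, diagonal_one, Matrix.mul_one, hQ']
  rw [hinv, hspec]
  calc Matrix.trace (Q * D * Qᴴ * (Q * diagonal g * Qᴴ))
      = Matrix.trace (Q * (D * (Qᴴ * Q) * diagonal g * Qᴴ)) := by
        simp only [Matrix.mul_assoc]
    _ = Matrix.trace (D * (Qᴴ * Q) * diagonal g * Qᴴ * Q) := by rw [Matrix.trace_mul_comm]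
    _ = Matrix.trace (D * diagonal g) := by
        rw [hQ, Matrix.mul_one, Matrix.mul_assoc, hQ, Matrix.mul_one]
    _ = ((∑ j, l j / (c * l j + 1) : ℝ) : ℂ) := by
        rw [hD, diagonal_mul_diagonal, trace_diagonal]
        have hterm : ∀ j, (Complex.ofReal ∘ l) j * g j = ((l j / (c * l j + 1) : ℝ) : ℂ) := by
          intro j
          simp only [hg, Function.comp_apply, div_eq_mul_inv]
          push_cast
          ring
        simp only [hterm]
        push_cast
        rfl

lemma f_mono {c x y : ℝ} (hc : 0 < c) (hx : 0 ≤ x) (hxy : x ≤ y) :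
    x / (c * x + 1) ≤ y / (c * y + 1) := by
  have hy : 0 ≤ y := hx.trans hxy
  have hx1 : (0:ℝ) < c * x + 1 := by positivity
  have hy1 : (0:ℝ) < c * y + 1 := by positivity
  rw [div_le_div_iff₀ hx1 hy1]
  nlinarith

/-- interlacing bound for the compressed resolvent trace.
Let `S` be an `N×N` Hermitian positive semidefinite complex matrix whose
eigenvalues, listed in decreasing order with multiplicity, are `μ 0 ≥ μ 1 ≥ …`
(`μ` is a decreasing rearrangement of the eigenvalues of `S`).  For every
semi-orthogonal `F ∈ ℂ^{N×M}` (`FᴴF = I`, `1 ≤ M ≤ N`) and real `c > 0`,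
`Tr(FᴴSF (c FᴴSF + I)⁻¹) ≤ Σ_{i<M} μ i / (c μ i + 1)`. -/
theorem stmt6 (N M : ℕ) (hM : 1 ≤ M) (hMN : M ≤ N)
    (S : Matrix (Fin N) (Fin N) ℂ) (hS : S.PosSemidef)
    (μ : Fin N → ℝ) (hμdec : ∀ i j : Fin N, i ≤ j → μ j ≤ μ i)
    (hμ : ∃ σ : Equiv.Perm (Fin N), μ = hS.1.eigenvalues ∘ σ)
    (F : Matrix (Fin N) (Fin M) ℂ) (hF : Fᴴ * F = 1)
    (c : ℝ) (hc : 0 < c) :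
    ∃ r : ℝ,
      Matrix.trace ((Fᴴ * S * F) * ((c : ℂ) • (Fᴴ * S * F) + 1)⁻¹) = (r : ℂ) ∧
      r ≤ ∑ i : Fin M, μ (Fin.castLE hMN i) / (c * μ (Fin.castLE hMN i) + 1) := by
  classical
  obtain ⟨σ, hμσ⟩ := hμ
  have hTpsd : (Fᴴ * S * F).PosSemidef := hS.conjTranspose_mul_mul_same F
  have hTh : (Fᴴ * S * F).IsHermitian := hTpsd.1
  set τ0 : Equiv.Perm (Fin M) := Tuple.sort (fun j => - hTpsd.1.eigenvalues j) with hτ0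
  set ν : Fin M → ℝ := hTpsd.1.eigenvalues ∘ τ0 with hνdef
  have hνdec : ∀ i j : Fin M, i ≤ j → ν j ≤ ν i := by
    intro i j hij
    have h := Tuple.monotone_sort (fun j => - hTpsd.1.eigenvalues j) hij
    simp only [Function.comp_apply] at h
    simpa [hνdef] using neg_le_neg_iff.mp h
  refine ⟨∑ j, hTpsd.1.eigenvalues j / (c * hTpsd.1.eigenvalues j + 1),
    trace_resolvent _ hTpsd c hc, ?_⟩
  have hsum : (∑ j, hTpsd.1.eigenvalues j / (c * hTpsd.1.eigenvalues j + 1))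
      = ∑ j, ν j / (c * ν j + 1) := by
    rw [hνdef]
    exact (Equiv.sum_comp τ0 (fun j => hTpsd.1.eigenvalues j /
      (c * hTpsd.1.eigenvalues j + 1))).symm
  rw [hsum]
  refine Finset.sum_le_sum fun j _ => ?_
  have hint : ν j ≤ μ (Fin.castLE hMN j) :=
    interlace hMN S hS.1 F hF hTpsd.1 μ σ hμσ hμdec ν τ0 hνdef hνdec j
  have hν0 : 0 ≤ ν j := hTpsd.eigenvalues_nonneg (τ0 j)
  exact f_mono hc hν0 hint
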